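/- For all non-negative integers n and positive integers k, the number of lattice points (x₁,…,x_n,y₁,…,y_n) ∈ ℤ^{2n} satisfying 0 ≤ x₁ ≤ x₂ ≤ ⋯ ≤ x_n ≤ k−1 and 0 ≤ y_i ≤ x_i for all i, equals h_n(1, 2, …, k), the complete homogeneous symmetric polynomial of degree n evaluated at 1, 2, …, k. -/
import Mathlib


open scoped Classical

/-- The Stirling number of the second kind `S(m, k)`: the number of partitions of an
`m`-element set into `k` non-empty blocks. -/
noncomputable def stirling2 (m k : ℕ) : ℕ :=
  Nat.card {P : Finpartition (Finset.univ : Finset (Fin m)) // P.parts.card = k}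

/-- The complete homogeneous symmetric polynomial of degree `n` evaluated at
`(1, 2, …, k)`, i.e. `∑_{1 ≤ z₁ ≤ ⋯ ≤ z_n ≤ k} z₁ ⋯ z_n`. -/
noncomputable def hNat (n k : ℕ) : ℕ :=
  ∑ f ∈ Finset.univ.filter (fun f : Fin n → Fin k => Monotone f), ∏ i, ((f i : ℕ) + 1)

theorem stmt_8 (n k : ℕ) (hk : 0 < k) :
    Nat.card {q : (Fin n → ℕ) × (Fin n → ℕ) //
        Monotone q.1 ∧ (∀ i, q.1 i ≤ k - 1) ∧ ∀ i, q.2 i ≤ q.1 i} = hNat n k := by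
  classical
  have e : {q : (Fin n → ℕ) × (Fin n → ℕ) //
        Monotone q.1 ∧ (∀ i, q.1 i ≤ k - 1) ∧ ∀ i, q.2 i ≤ q.1 i} ≃
      Σ f : {f : Fin n → Fin k // Monotone f}, Π i, Fin ((f.1 i : ℕ) + 1) :=
  { toFun := fun q =>
      ⟨⟨fun i => ⟨q.1.1 i, by have := q.2.2.1 i; omega⟩,
        fun i j h => by
          have := q.2.1 h
          rw [Fin.le_def]
          exact this⟩,
      fun i => ⟨q.1.2 i, by show q.1.2 i < q.1.1 i + 1; have h1 := q.2.2.2 i; omega⟩⟩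
    invFun := fun p =>
      ⟨(fun i => (p.1.1 i : ℕ), fun i => (p.2 i : ℕ)),
        fun i j h => p.1.2 h,
        fun i => by show (p.1.1 i : ℕ) ≤ k - 1; have := (p.1.1 i).isLt; omega,
        fun i => by show (p.2 i : ℕ) ≤ (p.1.1 i : ℕ); have h1 := (p.2 i).isLt; omega⟩
    left_inv := fun q => by
      apply Subtype.ext
      exact Prod.ext (funext fun i => rfl) (funext fun i => rfl)
    right_inv := fun p => by
      apply Sigma.ext
      · apply Subtype.ext; funext i; apply Fin.ext; rfl
      · apply heq_of_eq; funext i; apply Fin.ext; rfl }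
  rw [Nat.card_congr e, Nat.card_eq_fintype_card, Fintype.card_sigma]
  simp only [Fintype.card_pi, Fintype.card_fin]
  rw [hNat, Finset.sum_subtype (Finset.univ.filter fun f : Fin n → Fin k => Monotone f)
    (p := fun f : Fin n → Fin k => Monotone f)
    (fun x => by simp only [Finset.mem_filter, Finset.mem_univ, true_and])
    (fun f => ∏ i, ((f i : ℕ) + 1))]
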